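/- (Summability of residual terms.) Under the standing assumption, let (x^{k+1}, ỹ^{k+1}, y^{k+1}), k = 0, 1, 2, …, be the SPIDA sequence started at (x^0, y^0) ∈ X × Y, let (x*, y*) be a saddle point of L, and set Ψ := ψ − (α‖AᵀA‖/(ϱμ)) φ (with φ the kernel on ℝ^n). Then B_Ψ(x^{k+1}, x^k) ≥ 0 for all k, and for every N: Σ_{k=0}^{N} [ γ B_φ(ỹ^{k+1}, y^k) + (γ − 1/(αϱ)) B_φ(y^{k+1}, ỹ^{k+1}) + μ B_Ψ(x^{k+1}, x^k) ] ≤ γ B_φ(y*, y^0) + μ B_ψ(x*, x^0). -/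

import Mathlib

noncomputable section
open scoped RealInnerProductSpace
open Filter
open Topology

abbrev Euc (d : ℕ) : Type := EuclideanSpace ℝ (Fin d)

/-- Bregman distance associated with kernel `φ` whose gradient map is `φ'`. -/
def Breg {d : ℕ} (φ : Euc d → ℝ) (φ' : Euc d → Euc d) (x y : Euc d) : ℝ :=
  φ x - φ y - ⟪φ' y, x - y⟫

/-- The convex-concave Lagrangian `L(x,y) = f(x) + ⟨Ax, y⟩ − g(y)`. -/
def Lag {n m : ℕ} (f : Euc n → ℝ) (g : Euc m → ℝ) (A : Euc n →L[ℝ] Euc m)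
    (x : Euc n) (y : Euc m) : ℝ := f x + ⟪A x, y⟫ - g y

set_option maxHeartbeats 1000000

lemma lineDeriv' {d : ℕ} {φ : Euc d → ℝ} {G b : Euc d} (h : HasGradientAt φ G b) (v : Euc d) :
    Tendsto (fun t : ℝ => (φ (b + t • v) - φ b) / t) (𝓝[>] (0:ℝ)) (𝓝 ⟪G, v⟫) := by
  have hc : HasDerivAt (fun t : ℝ => b + t • v) v 0 := by
    simpa using ((hasDerivAt_id (0:ℝ)).smul_const v).const_add b
  have hb : (b : Euc d) = b + (0:ℝ) • v := by simp
  have hφ : HasDerivAt (fun t : ℝ => φ (b + t • v)) ⟪G, v⟫ 0 := by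
    have h2 := (hb ▸ h.hasFDerivAt).comp_hasDerivAt 0 hc
    simpa [Function.comp_def, InnerProductSpace.toDual_apply_apply] using h2
  have h3 := hasDerivAt_iff_tendsto_slope.mp hφ
  have h4 : Tendsto (slope (fun t : ℝ => φ (b + t • v)) 0) (𝓝[>] (0:ℝ)) (𝓝 ⟪G, v⟫) :=
    h3.mono_left (nhdsWithin_mono 0 (fun t ht => Set.mem_compl_singleton_iff.mpr (ne_of_gt ht)))
  refine h4.congr (fun t => ?_)
  simp [slope_def_field]

lemma grad_ineq {d : ℕ} {φ : Euc d → ℝ} {G b : Euc d} (hcv : ConvexOn ℝ Set.univ φ)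
    (hg : HasGradientAt φ G b) (a : Euc d) : ⟪G, a - b⟫ ≤ φ a - φ b := by
  refine le_of_tendsto (lineDeriv' hg (a - b)) ?_
  filter_upwards [Ioc_mem_nhdsGT_of_mem (by constructor <;> norm_num : (0:ℝ) ∈ Set.Ico (0:ℝ) 1)]
    with t ht
  have hmem : b + t • (a - b) = (1 - t) • b + t • a := by module
  have h1 := hcv.2 (Set.mem_univ b) (Set.mem_univ a)
    (by linarith [ht.2] : (0:ℝ) ≤ 1 - t) ht.1.le (by ring)
  simp only [smul_eq_mul] at h1
  rw [hmem, div_le_iff₀ ht.1]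
  nlinarith [h1]

lemma breg_nonneg {d : ℕ} {φ : Euc d → ℝ} {φ' : Euc d → Euc d}
    (hcv : ConvexOn ℝ Set.univ φ) (hφg : ∀ z, HasGradientAt φ (φ' z) z) (a b : Euc d) :
    0 ≤ Breg φ φ' a b := by
  have := grad_ineq hcv (hφg b) a
  simp only [Breg]; linarith

lemma gradComboSub {d : ℕ} {f g : Euc d → ℝ} {fg gg : Euc d} {x : Euc d} (c : ℝ)
    (hf : HasGradientAt f fg x) (hg : HasGradientAt g gg x) :
    HasGradientAt (fun z => f z - c * g z) (fg - c • gg) x := by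
  rw [hasGradientAt_iff_hasFDerivAt] at hf hg ⊢
  refine (hf.sub (hg.const_mul c)).congr_fderiv ?_
  ext v
  simp [InnerProductSpace.toDual_apply_apply, inner_sub_left, real_inner_smul_left]

lemma gradNormSq {d : ℕ} (x : Euc d) :
    HasGradientAt (fun z : Euc d => ‖z‖ ^ 2) ((2:ℝ) • x) x := by
  rw [hasGradientAt_iff_hasFDerivAt]
  have h := (hasFDerivAt_id x).norm_sq
  refine h.congr_fderiv ?_
  ext v
  simp [InnerProductSpace.toDual_apply_apply, real_inner_smul_left, two_smul, inner_add_left]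

lemma breg_strong {d : ℕ} {φ : Euc d → ℝ} {φ' : Euc d → Euc d}
    (hφg : ∀ z, HasGradientAt φ (φ' z) z) {ϱ : ℝ}
    (hsc : ConvexOn ℝ Set.univ (fun z => φ z - ϱ / 2 * ‖z‖ ^ 2)) (a b : Euc d) :
    ϱ / 2 * ‖a - b‖ ^ 2 ≤ Breg φ φ' a b := by
  have hgb : HasGradientAt (fun z => φ z - ϱ / 2 * ‖z‖ ^ 2) (φ' b - (ϱ/2) • ((2:ℝ) • b)) b :=
    gradComboSub (ϱ/2) (hφg b) (gradNormSq b)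
  have h1 := grad_ineq hsc hgb a
  have e1 : ⟪φ' b - (ϱ/2) • ((2:ℝ) • b), a - b⟫ = ⟪φ' b, a - b⟫ - ϱ * ⟪b, a - b⟫ := by
    rw [inner_sub_left, real_inner_smul_left, real_inner_smul_left]
    ring
  have e2 : ϱ / 2 * ‖a - b‖ ^ 2 = ϱ/2 * ‖a‖^2 - ϱ * ⟪a, b⟫ + ϱ/2 * ‖b‖^2 := by
    rw [norm_sub_sq_real]; ring
  have e3 : ϱ * ⟪b, a - b⟫ = ϱ * ⟪a, b⟫ - ϱ * ‖b‖^2 := by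
    rw [inner_sub_right, real_inner_self_eq_norm_sq, real_inner_comm]; ring
  rw [e1] at h1
  simp only [Breg]
  linarith

lemma three_point {d : ℕ} {Y : Set (Euc d)} (hY : Convex ℝ Y) {h : Euc d → ℝ}
    (hh : ConvexOn ℝ Set.univ h) {φ : Euc d → ℝ} {φ' : Euc d → Euc d}
    (hφg : ∀ z, HasGradientAt φ (φ' z) z) {γ : ℝ} (hγ : 0 < γ)
    {z0 zp : Euc d} (hzp : zp ∈ Y)
    (hmin : ∀ z ∈ Y, h zp + γ * Breg φ φ' zp z0 ≤ h z + γ * Breg φ φ' z z0)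
    {z : Euc d} (hz : z ∈ Y) :
    h zp + γ * Breg φ φ' zp z0 + γ * Breg φ φ' z zp ≤ h z + γ * Breg φ φ' z z0 := by
  have hkey : h zp - h z + γ * ⟪φ' z0, z - zp⟫ ≤ γ * ⟪φ' zp, z - zp⟫ := by
    refine ge_of_tendsto ((lineDeriv' (hφg zp) (z - zp)).const_mul γ) ?_
    filter_upwards [Ioc_mem_nhdsGT_of_mem (by constructor <;> norm_num : (0:ℝ) ∈ Set.Ico (0:ℝ) 1)]
      with t ht
    have hmemY : zp + t • (z - zp) ∈ Y := by
      have := hY hzp hz (by linarith [ht.2] : (0:ℝ) ≤ 1 - t) ht.1.le (by ring)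
      rwa [show (1-t) • zp + t • z = zp + t • (z - zp) by module] at this
    have h1 := hmin _ hmemY
    have h2 : h (zp + t • (z - zp)) ≤ (1 - t) * h zp + t * h z := by
      have := hh.2 (Set.mem_univ zp) (Set.mem_univ z)
        (by linarith [ht.2] : (0:ℝ) ≤ 1 - t) ht.1.le (by ring)
      simp only [smul_eq_mul] at this
      rwa [show (1-t) • zp + t • z = zp + t • (z - zp) by module] at this
    have hinner : ⟪φ' z0, (zp + t • (z - zp)) - z0⟫
        = ⟪φ' z0, zp - z0⟫ + t * ⟪φ' z0, z - zp⟫ := by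
      rw [show (zp + t • (z - zp)) - z0 = (zp - z0) + t • (z - zp) by module,
        inner_add_right, real_inner_smul_right]
    simp only [Breg] at h1
    rw [mul_div_assoc' γ, le_div_iff₀ ht.1]
    rw [hinner] at h1
    nlinarith [h1, h2]
  have e1 : ⟪φ' z0, z - z0⟫ = ⟪φ' z0, z - zp⟫ + ⟪φ' z0, zp - z0⟫ := by
    rw [← inner_add_right]
    congr 1
    abel
  simp only [Breg]
  nlinarith [hkey, e1]

/-- summability of the residual terms along the SPIDA sequence. -/
theorem spida_residual_summability {n m : ℕ}
    (X : Set (Euc n)) (Y : Set (Euc m))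
    (hXne : X.Nonempty) (hXcl : IsClosed X) (hXcv : Convex ℝ X)
    (hYne : Y.Nonempty) (hYcl : IsClosed Y) (hYcv : Convex ℝ Y)
    (f : Euc n → ℝ) (g : Euc m → ℝ)
    (hf : ConvexOn ℝ Set.univ f) (hflsc : LowerSemicontinuous f)
    (hg : ConvexOn ℝ Set.univ g) (hglsc : LowerSemicontinuous g)
    (A : Euc n →L[ℝ] Euc m)
    (γ μ : ℝ) (hγ : 0 < γ) (hμ : 0 < μ)
    (φ : Euc m → ℝ) (φ' : Euc m → Euc m)
    (hφg : ∀ z, HasGradientAt φ (φ' z) z) (hφcv : ConvexOn ℝ Set.univ φ)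
    (ψ : Euc n → ℝ) (ψ' : Euc n → Euc n)
    (hψg : ∀ z, HasGradientAt ψ (ψ' z) z) (hψcv : ConvexOn ℝ Set.univ ψ)
    (x : ℕ → Euc n) (yt y : ℕ → Euc m)
    (hx0 : x 0 ∈ X) (hy0 : y 0 ∈ Y)
    (hytmem : ∀ k, yt (k + 1) ∈ Y)
    (hytmax : ∀ k, ∀ z ∈ Y, -g z + ⟪A (x k), z⟫ - γ * Breg φ φ' z (y k) ≤
      -g (yt (k + 1)) + ⟪A (x k), yt (k + 1)⟫ - γ * Breg φ φ' (yt (k + 1)) (y k))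
    (hxmem : ∀ k, x (k + 1) ∈ X)
    (hxmin : ∀ k, ∀ z ∈ X,
      f (x (k + 1)) + ⟪A (x (k + 1)), yt (k + 1)⟫ + μ * Breg ψ ψ' (x (k + 1)) (x k) ≤
        f z + ⟪A z, yt (k + 1)⟫ + μ * Breg ψ ψ' z (x k))
    (hymem : ∀ k, y (k + 1) ∈ Y)
    (hymax : ∀ k, ∀ z ∈ Y, -g z + ⟪A (x (k + 1)), z⟫ - γ * Breg φ φ' z (y k) ≤
      -g (y (k + 1)) + ⟪A (x (k + 1)), y (k + 1)⟫ - γ * Breg φ φ' (y (k + 1)) (y k))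
    (ϱ α : ℝ) (hϱ : 0 < ϱ) (hα : 0 < α)
    (hφsc : ConvexOn ℝ Set.univ (fun z => φ z - ϱ / 2 * ‖z‖ ^ 2))
    (hαϱγ : 1 ≤ α * ϱ * γ)
    (φn : Euc n → ℝ) (φn' : Euc n → Euc n)
    (hφng : ∀ z, HasGradientAt φn (φn' z) z)
    (hφnsc : ConvexOn ℝ Set.univ (fun z => φn z - ϱ / 2 * ‖z‖ ^ 2))
    (L0 : ℝ) (hL0pos : 0 < L0)
    (hL0le : L0 ≤ ϱ * μ / (α * ‖(ContinuousLinearMap.adjoint A).comp A‖))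
    (hLψφ : ConvexOn ℝ Set.univ (fun z => L0 * ψ z - φn z))
    (xs : Euc n) (ys : Euc m) (hxs : xs ∈ X) (hys : ys ∈ Y)
    (hsaddle : ∀ xx ∈ X, ∀ yy ∈ Y,
      Lag f g A xs yy ≤ Lag f g A xs ys ∧ Lag f g A xs ys ≤ Lag f g A xx ys)
    (Ψ : Euc n → ℝ) (Ψ' : Euc n → Euc n)
    (hΨ : Ψ = fun z =>
      ψ z - α * ‖(ContinuousLinearMap.adjoint A).comp A‖ / (ϱ * μ) * φn z)
    (hΨ' : Ψ' = fun z =>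
      ψ' z - (α * ‖(ContinuousLinearMap.adjoint A).comp A‖ / (ϱ * μ)) • φn' z) :
    (∀ k, 0 ≤ Breg Ψ Ψ' (x (k + 1)) (x k)) ∧
      ∀ N : ℕ,
        ∑ k ∈ Finset.range (N + 1),
            (γ * Breg φ φ' (yt (k + 1)) (y k)
              + (γ - 1 / (α * ϱ)) * Breg φ φ' (y (k + 1)) (yt (k + 1))
              + μ * Breg Ψ Ψ' (x (k + 1)) (x k)) ≤
          γ * Breg φ φ' ys (y 0) + μ * Breg ψ ψ' xs (x 0) := by
  set NN : ℝ := ‖(ContinuousLinearMap.adjoint A).comp A‖ with hNNdef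
  -- NN is positive
  have hNN0 : 0 ≤ NN := norm_nonneg _
  have hNNpos : 0 < NN := by
    rcases lt_or_eq_of_le hNN0 with h | h
    · exact h
    · exfalso
      rw [← h, mul_zero, div_zero] at hL0le
      linarith
  -- operator norm bound
  have hAN : ∀ w : Euc n, ‖A w‖ ^ 2 ≤ NN * ‖w‖ ^ 2 := by
    intro w
    have e1 : ‖A w‖ ^ 2 = ⟪((ContinuousLinearMap.adjoint A).comp A) w, w⟫ := by
      rw [ContinuousLinearMap.comp_apply, ContinuousLinearMap.adjoint_inner_left,
        real_inner_self_eq_norm_sq]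
    have e2 : ⟪((ContinuousLinearMap.adjoint A).comp A) w, w⟫
        ≤ ‖((ContinuousLinearMap.adjoint A).comp A) w‖ * ‖w‖ := real_inner_le_norm _ _
    have e3 : ‖((ContinuousLinearMap.adjoint A).comp A) w‖ ≤ NN * ‖w‖ :=
      ContinuousLinearMap.le_opNorm _ w
    nlinarith [norm_nonneg w, norm_nonneg (((ContinuousLinearMap.adjoint A).comp A) w)]
  -- gradient of Ψ
  have hΨg : ∀ z, HasGradientAt Ψ (Ψ' z) z := by
    intro z
    rw [hΨ, hΨ']
    exact gradComboSub _ (hψg z) (hφng z)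
  -- convexity of φn
  have hφncv : ConvexOn ℝ Set.univ φn := by
    have h1 : StrongConvexOn Set.univ ϱ φn := strongConvexOn_iff_convex.mpr hφnsc
    exact h1.convexOn (fun r => by positivity)
  -- convexity of Ψ
  have hcle : α * NN / (ϱ * μ) ≤ 1 / L0 := by
    rw [le_div_iff₀ (by positivity : (0:ℝ) < α * NN)] at hL0le
    rw [div_le_div_iff₀ (by positivity) hL0pos]
    nlinarith
  have hΨcv : ConvexOn ℝ Set.univ Ψ := by
    have h1 : ConvexOn ℝ Set.univ (fun z => (1/L0) * (L0 * ψ z - φn z)) := by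
      simpa [smul_eq_mul] using hLψφ.smul (by positivity : (0:ℝ) ≤ 1/L0)
    have h2 : ConvexOn ℝ Set.univ (fun z => (1/L0 - α * NN / (ϱ * μ)) * φn z) := by
      simpa [smul_eq_mul] using hφncv.smul (by linarith : (0:ℝ) ≤ 1/L0 - α * NN / (ϱ * μ))
    have h3 := h1.add h2
    have he : Ψ = fun z => (1/L0) * (L0 * ψ z - φn z) + (1/L0 - α * NN / (ϱ * μ)) * φn z := by
      rw [hΨ]
      funext z
      field_simp
      ring
    rw [he]
    exact h3
  have part1 : ∀ k, 0 ≤ Breg Ψ Ψ' (x (k + 1)) (x k) :=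
    fun k => breg_nonneg hΨcv hΨg _ _
  refine ⟨part1, ?_⟩
  -- Bregman decomposition for Ψ
  have hBΨ : ∀ a b : Euc n, μ * Breg Ψ Ψ' a b
      = μ * Breg ψ ψ' a b - (α * NN / ϱ) * Breg φn φn' a b := by
    intro a b
    rw [hΨ, hΨ']
    simp only [Breg, inner_sub_left, real_inner_smul_left]
    field_simp
    ring
  -- the per-step key inequality
  have key : ∀ k,
      γ * Breg φ φ' (yt (k + 1)) (y k)
        + (γ - 1 / (α * ϱ)) * Breg φ φ' (y (k + 1)) (yt (k + 1))
        + μ * Breg Ψ Ψ' (x (k + 1)) (x k)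
        + (γ * Breg φ φ' ys (y (k + 1)) + μ * Breg ψ ψ' xs (x (k + 1)))
      ≤ γ * Breg φ φ' ys (y k) + μ * Breg ψ ψ' xs (x k) := by
    intro k
    -- convexity of the partial objectives
    have hcv1 : ∀ w : Euc m, ConvexOn ℝ Set.univ (fun z : Euc m => g z - ⟪w, z⟫) := by
      intro w
      refine ⟨convex_univ, fun a _ b _ p q hp hq hpq => ?_⟩
      have h1 := hg.2 (Set.mem_univ a) (Set.mem_univ b) hp hq hpq
      simp only [smul_eq_mul] at h1 ⊢
      rw [inner_add_right, real_inner_smul_right, real_inner_smul_right]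
      linarith
    have hcv2 : ConvexOn ℝ Set.univ (fun z : Euc n => f z + ⟪A z, yt (k + 1)⟫) := by
      refine ⟨convex_univ, fun a _ b _ p q hp hq hpq => ?_⟩
      have h1 := hf.2 (Set.mem_univ a) (Set.mem_univ b) hp hq hpq
      simp only [smul_eq_mul] at h1 ⊢
      rw [map_add, map_smul, map_smul, inner_add_left, real_inner_smul_left,
        real_inner_smul_left]
      linarith
    -- three-point inequalities
    have E1 := three_point hYcv (hcv1 (A (x k))) hφg hγ (hytmem k)
      (fun z hz => by have := hytmax k z hz; beta_reduce; linarith) (hymem k)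
    have E2 := three_point hYcv (hcv1 (A (x (k+1)))) hφg hγ (hymem k)
      (fun z hz => by have := hymax k z hz; beta_reduce; linarith) hys
    have E3 := three_point hXcv hcv2 hψg hμ (hxmem k)
      (fun z hz => by have := hxmin k z hz; beta_reduce; linarith) hxs
    beta_reduce at E1 E2 E3
    -- saddle point inequality
    have hS := hsaddle (x (k+1)) (hxmem k) (yt (k+1)) (hytmem k)
    have Sdl : f xs + ⟪A xs, yt (k+1)⟫ - g (yt (k+1))
        ≤ f (x (k+1)) + ⟪A (x (k+1)), ys⟫ - g ys := by
      have h1 := hS.1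
      have h2 := hS.2
      simp only [Lag] at h1 h2
      linarith
    -- cross term bound
    set u : Euc m := A (x (k+1)) - A (x k) with hu
    set v : Euc m := y (k+1) - yt (k+1) with hv
    have hCr : ⟪u, v⟫ ≤ α * NN / 2 * ‖x (k+1) - x k‖ ^ 2 + 1/(2*α) * ‖v‖ ^ 2 := by
      have h1 : ⟪u, v⟫ ≤ ‖u‖ * ‖v‖ := real_inner_le_norm _ _
      have hP : α/2 * ‖u‖^2 + 1/(2*α) * ‖v‖^2 - ‖u‖ * ‖v‖ = (α*‖u‖ - ‖v‖)^2 / (2*α) := by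
        field_simp
        ring
      have hP2 : (0:ℝ) ≤ (α*‖u‖ - ‖v‖)^2 / (2*α) := by positivity
      have h3 : ‖u‖^2 ≤ NN * ‖x (k+1) - x k‖^2 := by
        have : u = A (x (k+1) - x k) := by rw [hu, map_sub]
        rw [this]
        exact hAN _
      have h4 := mul_le_mul_of_nonneg_left h3 (by positivity : (0:ℝ) ≤ α/2)
      nlinarith
    have hCrExp : ⟪u, v⟫ = ⟪A (x (k+1)), y (k+1)⟫ - ⟪A (x (k+1)), yt (k+1)⟫
        - ⟪A (x k), y (k+1)⟫ + ⟪A (x k), yt (k+1)⟫ := by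
      rw [hu, hv, inner_sub_left, inner_sub_right, inner_sub_right]
      ring
    -- strong convexity bounds, pre-scaled
    have Sy := breg_strong hφg hφsc (y (k+1)) (yt (k+1))
    have Sy' : 1/(2*α) * ‖v‖^2 ≤ 1/(α*ϱ) * Breg φ φ' (y (k+1)) (yt (k+1)) := by
      have h1 : 1/(2*α) * ‖v‖^2 = 1/(α*ϱ) * (ϱ/2 * ‖v‖^2) := by
        field_simp
      rw [h1, hv]
      exact mul_le_mul_of_nonneg_left Sy (by positivity)
    have Sx := breg_strong hφng hφnsc (x (k+1)) (x k)
    have Sx' : α * NN / 2 * ‖x (k+1) - x k‖^2 ≤ (α * NN / ϱ) * Breg φn φn' (x (k+1)) (x k) := by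
      have h1 : α * NN / 2 * ‖x (k+1) - x k‖^2 = (α * NN / ϱ) * (ϱ/2 * ‖x (k+1) - x k‖^2) := by
        field_simp
      rw [h1]
      exact mul_le_mul_of_nonneg_left Sx (by positivity)
    have hBΨk := hBΨ (x (k+1)) (x k)
    linarith [E1, E2, E3, Sdl, hCr, hCrExp, Sy', Sx', hBΨk]
  -- telescoping
  intro N
  set T : ℕ → ℝ := fun k =>
    γ * Breg φ φ' (yt (k + 1)) (y k)
      + (γ - 1 / (α * ϱ)) * Breg φ φ' (y (k + 1)) (yt (k + 1))
      + μ * Breg Ψ Ψ' (x (k + 1)) (x k) with hT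
  set D : ℕ → ℝ := fun k => γ * Breg φ φ' ys (y k) + μ * Breg ψ ψ' xs (x k) with hD
  have hsum : ∀ N : ℕ, ∑ k ∈ Finset.range (N + 1), T k + D (N + 1) ≤ D 0 := by
    intro N
    induction N with
    | zero =>
      simp only [Finset.sum_range_one, hT, hD]
      have := key 0
      norm_num at this ⊢
      linarith
    | succ N ih =>
      rw [Finset.sum_range_succ]
      have := key (N + 1)
      simp only [hT, hD] at *
      linarith
  have hDnn : 0 ≤ D (N + 1) := by
    have h1 := breg_nonneg hφcv hφg ys (y (N + 1))
    have h2 := breg_nonneg hψcv hψg xs (x (N + 1))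
    simp only [hD]
    positivity
  have := hsum N
  calc ∑ k ∈ Finset.range (N + 1), T k ≤ D 0 - D (N+1) := by linarith
    _ ≤ D 0 := by linarith
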